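/- Let S_1, ..., S_n be compact subsets of R^q and let x be a point in the convex hull of the Minkowski sum S_1 + ... + S_n. Then there exist points x_i in conv(S_i) for each i with x = x_1 + ... + x_n, such that x_i ∈ S_i for all but at most q indices i. -/

import Mathlib

open scoped Pointwise

theorem shapley_folkman (q n : ℕ) (S : Fin n → Set (EuclideanSpace ℝ (Fin q)))
    (hS : ∀ i, IsCompact (S i)) (x : EuclideanSpace ℝ (Fin q))
    (hx : x ∈ convexHull ℝ (∑ i, S i)) :
    ∃ y : Fin n → EuclideanSpace ℝ (Fin q),
      (∀ i, y i ∈ convexHull ℝ (S i)) ∧ x = ∑ i, y i ∧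
      ∃ I : Finset (Fin n), I.card ≤ q ∧ ∀ i ∉ I, y i ∈ S i := by
  classical
  rcases Nat.eq_zero_or_pos n with hn | hn
  · subst hn
    exact ⟨fun _ => 0, fun i => i.elim0, by simpa using hx, ∅, by simp, fun i _ => i.elim0⟩
  have hn0 : (n : ℝ) ≠ 0 := Nat.cast_ne_zero.mpr hn.ne'
  rw [convexHull_sum, Set.mem_fintype_sum] at hx
  obtain ⟨g, hg, hgx⟩ := hx
  set T : Set (EuclideanSpace ℝ (Fin q) × (Fin n → ℝ)) :=
    ⋃ i, (fun s => (s, Pi.single i (1 : ℝ))) '' S i with hT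
  set z : EuclideanSpace ℝ (Fin q) × (Fin n → ℝ) := (x, fun _ => 1) with hzdef
  have hlift : ∀ i, ((g i, Pi.single i (1 : ℝ)) :
      EuclideanSpace ℝ (Fin q) × (Fin n → ℝ)) ∈ convexHull ℝ T := by
    intro i
    have hgi := hg i
    rw [convexHull_eq] at hgi
    obtain ⟨ι', tt, w, zz, hw0, hw1, hzz, hcm⟩ := hgi
    have hcc : tt.centerMass w (fun j => ((zz j, Pi.single i (1 : ℝ)) :
        EuclideanSpace ℝ (Fin q) × (Fin n → ℝ))) = (g i, Pi.single i 1) := by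
      rw [Finset.centerMass_eq_of_sum_1 _ _ hw1]
      rw [← hcm, Finset.centerMass_eq_of_sum_1 _ _ hw1]
      refine Prod.ext ?_ ?_
      · simp [Prod.fst_sum]
      · simp [Prod.snd_sum, ← Finset.sum_smul, hw1]
    rw [← hcc]
    exact tt.centerMass_mem_convexHull hw0 (hw1.symm ▸ zero_lt_one) fun j hj =>
      Set.mem_iUnion.2 ⟨i, ⟨zz j, hzz j hj, rfl⟩⟩
  have hzT : (n : ℝ)⁻¹ • z ∈ convexHull ℝ T := by
    have hsum : ∑ i : Fin n, (n : ℝ)⁻¹ • ((g i, Pi.single i (1 : ℝ)) :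
        EuclideanSpace ℝ (Fin q) × (Fin n → ℝ)) = (n : ℝ)⁻¹ • z := by
      rw [← Finset.smul_sum]
      congr 1
      refine Prod.ext ?_ ?_
      · simp [Prod.fst_sum, hgx, hzdef]
      · simp [Prod.snd_sum, Finset.univ_sum_single, hzdef]
    rw [← hsum]
    exact (convex_convexHull ℝ T).sum_mem (fun i _ => by positivity)
      (by simp [Finset.card_univ]; field_simp) (fun i _ => hlift i)
  rw [convexHull_eq_union] at hzT
  simp only [Set.mem_iUnion] at hzT
  obtain ⟨t, htT, hai, hzt⟩ := hzT
  have htne : t.Nonempty := by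
    rcases t.eq_empty_or_nonempty with rfl | h
    · simp at hzt
    · exact h
  -- the linear functional
  set f : (EuclideanSpace ℝ (Fin q) × (Fin n → ℝ)) →ₗ[ℝ] ℝ :=
    { toFun := fun p => ∑ j, p.2 j
      map_add' := fun a b => by simp [Finset.sum_add_distrib]
      map_smul' := fun c a => by simp [Finset.mul_sum] } with hf
  have hfT : ∀ p ∈ T, f p = 1 := by
    intro p hp
    rw [hT, Set.mem_iUnion] at hp
    obtain ⟨i, s, hs, rfl⟩ := hp
    simp [hf, Finset.sum_pi_single']
  have hcard : t.card ≤ q + n := by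
    have hne : Nonempty {p // p ∈ t} := htne.to_subtype
    have h1 := hai.finrank_vectorSpan_add_one
    have hspan : vectorSpan ℝ (Set.range (Subtype.val : {p // p ∈ t} → _)) ≤
        LinearMap.ker f := by
      rw [Subtype.range_coe, vectorSpan_def, Submodule.span_le]
      rintro v ⟨a, ha, b, hb, rfl⟩
      simp only [SetLike.mem_coe, LinearMap.mem_ker, vsub_eq_sub, map_sub]
      rw [hfT a (htT ha), hfT b (htT hb), sub_self]
    have hker : Module.finrank ℝ (LinearMap.ker f) + 1 = q + n := by
      have hsurj : Function.Surjective f := fun r =>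
        ⟨(0, Pi.single ⟨0, hn⟩ r), by simp [hf, Finset.sum_pi_single']⟩
      have h2 := LinearMap.finrank_range_add_finrank_ker f
      rw [LinearMap.range_eq_top.2 hsurj, finrank_top] at h2
      rw [Module.finrank_prod, finrank_euclideanSpace_fin] at h2
      simp [Module.finrank_self] at h2
      omega
    have hle := Submodule.finrank_mono hspan
    rw [Fintype.card_coe] at h1
    omega
  rw [Finset.convexHull_eq] at hzt
  obtain ⟨w, hw0, hw1, hcm⟩ := hzt
  rw [Finset.centerMass_eq_of_sum_1 _ _ hw1] at hcm
  simp only [id_eq] at hcm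
  set W : _ → ℝ := fun p => n * w p with hW
  have hW0 : ∀ p ∈ t, 0 ≤ W p := fun p hp => mul_nonneg (Nat.cast_nonneg n) (hw0 p hp)
  have hzW : ∑ p ∈ t, W p • p = z := by
    calc ∑ p ∈ t, W p • p = (n : ℝ) • ∑ p ∈ t, w p • p := by
          rw [Finset.smul_sum]; exact Finset.sum_congr rfl fun p _ => (smul_smul _ _ _).symm
      _ = (n : ℝ) • ((n : ℝ)⁻¹ • z) := by rw [hcm]
      _ = z := smul_inv_smul₀ hn0 z
  have hidx : ∀ p : EuclideanSpace ℝ (Fin q) × (Fin n → ℝ),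
      ∃ i : Fin n, p ∈ t → (p.1 ∈ S i ∧ p.2 = Pi.single i 1) := by
    intro p
    by_cases hp : p ∈ t
    · have := htT hp
      rw [hT, Set.mem_iUnion] at this
      obtain ⟨i, s, hs, hps⟩ := this
      exact ⟨i, fun _ => by rw [← hps]; exact ⟨hs, rfl⟩⟩
    · exact ⟨⟨0, hn⟩, fun h => absurd h hp⟩
  choose idx hidx' using hidx
  have hidx1 : ∀ p ∈ t, p.1 ∈ S (idx p) := fun p hp => (hidx' p hp).1
  have hidx2 : ∀ p ∈ t, p.2 = Pi.single (idx p) 1 := fun p hp => (hidx' p hp).2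
  set u := t.filter (fun p => 0 < W p) with hu
  have hut : u ⊆ t := Finset.filter_subset _ _
  have hzWu : ∑ p ∈ u, W p • p = z := by
    rw [← hzW]
    refine Finset.sum_filter_of_ne fun p hp hne => ?_
    by_contra h
    exact hne (by rw [le_antisymm (not_lt.1 h) (hW0 p hp), zero_smul])
  set ti : Fin n → Finset _ := fun i => u.filter (fun p => idx p = i) with hti
  have key : ∀ i : Fin n, ∑ p ∈ ti i, W p = 1 := by
    intro i
    have : ∑ p ∈ ti i, W p = (∑ p ∈ u, W p • p).2 i := by
      rw [hti]
      calc ∑ p ∈ u.filter (fun p => idx p = i), W p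
          = ∑ p ∈ u, if idx p = i then W p else 0 := Finset.sum_filter _ _
        _ = ∑ p ∈ u, W p * p.2 i := by
            refine Finset.sum_congr rfl fun p hp => ?_
            rw [hidx2 p (hut hp), Pi.single_apply]
            by_cases h : idx p = i
            · simp [h]
            · rw [if_neg h, if_neg fun hh => h hh.symm, mul_zero]
        _ = (∑ p ∈ u, W p • p).2 i := by
            simp [Prod.snd_sum, Finset.sum_apply]
    rw [this, hzWu, hzdef]
  set y : Fin n → EuclideanSpace ℝ (Fin q) := fun i => ∑ p ∈ ti i, W p • p.1 with hy
  have hymem : ∀ i, y i ∈ convexHull ℝ (S i) := by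
    intro i
    refine (convex_convexHull ℝ (S i)).sum_mem
      (fun p hp => hW0 p (hut (Finset.mem_filter.1 hp).1)) (key i) fun p hp => ?_
    obtain ⟨hpu, hpi⟩ := Finset.mem_filter.1 hp
    have := hidx1 p (hut hpu)
    rw [hpi] at this
    exact subset_convexHull ℝ (S i) this
  have hxsum : x = ∑ i, y i := by
    have h1 : (∑ p ∈ u, W p • p).1 = x := by rw [hzWu, hzdef]
    rw [Prod.fst_sum] at h1
    simp only [Prod.smul_fst] at h1
    rw [← h1, hy]
    exact (Finset.sum_fiberwise_of_maps_to (fun p _ => Finset.mem_univ (idx p)) _).symm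
  have hfib : ∑ i, (ti i).card = u.card :=
    (Finset.card_eq_sum_card_fiberwise (fun p _ => Finset.mem_univ (idx p))).symm
  have hone : ∀ i, 1 ≤ (ti i).card := by
    intro i
    rcases Finset.eq_empty_or_nonempty (ti i) with h | h
    · exfalso; have := key i; rw [h] at this; simp at this
    · exact Finset.card_pos.2 h
  set I := Finset.univ.filter (fun i : Fin n => 2 ≤ (ti i).card) with hI
  have hIcard : I.card ≤ q := by
    have h2 : ∑ i, ((ti i).card - 1) + n = ∑ i, (ti i).card := by
      calc ∑ i, ((ti i).card - 1) + n = ∑ i : Fin n, (((ti i).card - 1) + 1) := by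
            rw [Finset.sum_add_distrib]; simp [Finset.card_univ]
        _ = ∑ i, (ti i).card :=
            Finset.sum_congr rfl fun i _ => Nat.succ_pred_eq_of_pos (hone i)
    have h3 : I.card ≤ ∑ i, ((ti i).card - 1) := by
      calc I.card = ∑ _i ∈ I, 1 := by simp
        _ ≤ ∑ i ∈ I, ((ti i).card - 1) := Finset.sum_le_sum fun i hi => by
            have := (Finset.mem_filter.1 hi).2; omega
        _ ≤ ∑ i, ((ti i).card - 1) := Finset.sum_le_sum_of_subset (Finset.filter_subset _ _)
    have h4 : u.card ≤ t.card := Finset.card_le_card hut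
    omega
  refine ⟨y, hymem, hxsum, I, hIcard, ?_⟩
  intro i hiI
  have h1 : (ti i).card = 1 := by
    have := hone i
    have h2 : ¬ 2 ≤ (ti i).card := fun h => hiI (Finset.mem_filter.2 ⟨Finset.mem_univ _, h⟩)
    omega
  obtain ⟨p0, hp0⟩ := Finset.card_eq_one.1 h1
  have hp0m : p0 ∈ ti i := hp0 ▸ Finset.mem_singleton_self p0
  have hW1 : W p0 = 1 := by have := key i; rwa [hp0, Finset.sum_singleton] at this
  have hyi : y i = p0.1 := by rw [hy]; simp [hp0, Finset.sum_singleton, hW1]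
  rw [hyi]
  obtain ⟨hp0u, hp0i⟩ := Finset.mem_filter.1 hp0m
  have := hidx1 p0 (hut hp0u)
  rwa [hp0i] at this
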